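/- Let C be an (n,k) convolutional code (a rank-k F[z]-submodule of F[z]^n given as the kernel of a full-row-rank polynomial parity check matrix H(z) = Σ H_i z^i). For every j ≥ 0, the j-th column distance satisfies d_j^c(C) ≤ (j+1)(n−k) + 1. -/

import Mathlib

/-- The truncated sliding parity-check matrix: the (j+1)(n-k) × (j+1)n lower
block triangular Toeplitz matrix whose block (r,s) equals H_{r-s} for r ≥ s and
0 otherwise, built from the coefficients H_0, H_1, ... of H(z). -/
def slidingParity {F : Type*} [Field F] (n k : ℕ) (hk : k < n)
    (H : ℕ → Matrix (Fin (n - k)) (Fin n) F) (j : ℕ) :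
    Matrix (Fin ((j + 1) * (n - k))) (Fin ((j + 1) * n)) F :=
  Matrix.of fun a b =>
    if (b : ℕ) / n ≤ (a : ℕ) / (n - k) then
      H ((a : ℕ) / (n - k) - (b : ℕ) / n)
        ⟨(a : ℕ) % (n - k), Nat.mod_lt _ (by omega)⟩
        ⟨(b : ℕ) % n, Nat.mod_lt _ (by omega)⟩
    else 0

/-- Hamming weight of a vector. -/
noncomputable def hammingWt {F : Type*} {ι : Type*} [Zero F] (v : ι → F) : ℕ :=
  Nat.card {i // v i ≠ 0}

/-- The j-th column distance: the minimal Hamming weight of a truncated codeword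
(v_0,...,v_j) ∈ F^{(j+1)n} lying in the kernel of the sliding parity-check
matrix and with v_0 ≠ 0 (i.e. nonzero in the first block of n coordinates). -/
noncomputable def colDist {F : Type*} [Field F] (n k : ℕ) (hk : k < n)
    (H : ℕ → Matrix (Fin (n - k)) (Fin n) F) (j : ℕ) : ℕ :=
  sInf {w | ∃ v : Fin ((j + 1) * n) → F,
    Matrix.mulVec (slidingParity n k hk H j) v = 0 ∧
    (∃ t : Fin ((j + 1) * n), (t : ℕ) < n ∧ v t ≠ 0) ∧
    hammingWt v = w}

open Matrix in
lemma exists_sol {F : Type*} [Field F] {m n : ℕ}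
    (A : Matrix (Fin m) (Fin n) F) (hrank : A.rank = m) :
    ∃ s : Finset (Fin n), s.card = m ∧ ∃ sol : (Fin m → F) → (Fin n → F),
      (∀ t, A *ᵥ sol t = t) ∧ ∀ t i, i ∉ s → sol t i = 0 := by
  classical
  have htop : LinearMap.range A.mulVecLin = ⊤ := by
    apply Submodule.eq_top_of_finrank_eq
    rw [show Module.finrank F (LinearMap.range A.mulVecLin) = A.rank from rfl, hrank]
    simp [Module.finrank_pi]
  have hspan : Submodule.span F (Set.range Aᵀ) = ⊤ := by
    rw [Matrix.range_mulVecLin] at htop; exact htop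
  obtain ⟨b, hbsub, hbspan, hbind⟩ := exists_linearIndependent F (Set.range Aᵀ)
  rw [hspan] at hbspan
  haveI : Finite ↥b := hbind.finite
  haveI : Fintype ↥b := Fintype.ofFinite _
  let basis : Module.Basis b F (Fin m → F) := Module.Basis.mk hbind (by rw [Subtype.range_coe]; exact hbspan.ge)
  have hcardb : Fintype.card ↥b = m := by
    rw [← Module.finrank_eq_card_basis basis]
    simp [Module.finrank_pi]
  have he : ∀ x : ↥b, ∃ i : Fin n, Aᵀ i = (x : Fin m → F) := fun x => hbsub x.2
  choose e hecol using he
  have heinj : Function.Injective e := by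
    intro x y hxy
    have : (x : Fin m → F) = y := by rw [← hecol x, ← hecol y, hxy]
    exact Subtype.ext this
  refine ⟨Finset.univ.image e, ?_, fun t i => ∑ x : ↥b, if e x = i then basis.repr t x else 0, ?_, ?_⟩
  · rw [Finset.card_image_of_injective _ heinj, Finset.card_univ, hcardb]
  · intro t
    funext r
    rw [Matrix.mulVec, dotProduct]
    have : ∀ i : Fin n, A r i * (∑ x : ↥b, if e x = i then basis.repr t x else 0)
        = ∑ x : ↥b, if e x = i then A r i * basis.repr t x else 0 := by
      intro i; rw [Finset.mul_sum]; congr 1; funext x; rw [mul_ite, mul_zero]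
    simp_rw [this]
    rw [Finset.sum_comm]
    have : ∀ x : ↥b, (∑ i : Fin n, if e x = i then A r i * basis.repr t x else 0)
        = basis.repr t x * (x : Fin m → F) r := by
      intro x
      rw [Finset.sum_ite_eq Finset.univ (e x) (fun i => A r i * basis.repr t x)]
      simp only [Finset.mem_univ, if_true]
      rw [mul_comm]
      congr 1
      have := congrFun (hecol x) r
      simpa [Matrix.transpose_apply] using this
    simp_rw [this]
    have hsum := basis.sum_repr t
    have := congrFun hsum r
    rw [Finset.sum_apply] at this
    simp only [Pi.smul_apply, smul_eq_mul] at this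
    rw [← this]
    congr 1; funext x
    congr 1
    simp [basis, Module.Basis.mk_apply]
  · intro t i hi
    apply Finset.sum_eq_zero
    intro x _
    rw [if_neg]
    intro hxi
    exact hi (Finset.mem_image.mpr ⟨x, Finset.mem_univ _, hxi⟩)

noncomputable def seqU {F : Type*} [Field F] {m n : ℕ}
    (H : ℕ → Matrix (Fin m) (Fin n) F)
    (sol : (Fin m → F) → (Fin n → F)) (base : ℕ → Fin n → F) : ℕ → Fin n → F
  | i => base i + sol (- ∑ l ∈ (Finset.range i).attach,
      Matrix.mulVec (H (i - (l : ℕ))) (seqU H sol base (l : ℕ)) - Matrix.mulVec (H 0) (base i))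
decreasing_by exact Finset.mem_range.mp l.2

lemma seqU_key {F : Type*} [Field F] {m n : ℕ}
    (H : ℕ → Matrix (Fin m) (Fin n) F)
    (sol : (Fin m → F) → (Fin n → F)) (base : ℕ → Fin n → F)
    (hsol : ∀ t, Matrix.mulVec (H 0) (sol t) = t) (i : ℕ) :
    ∑ l ∈ Finset.range (i + 1), Matrix.mulVec (H (i - l)) (seqU H sol base l) = 0 := by
  rw [Finset.sum_range_succ]
  have h1 : Matrix.mulVec (H (i - i)) (seqU H sol base i)
      = - ∑ l ∈ Finset.range i, Matrix.mulVec (H (i - l)) (seqU H sol base l) := by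
    rw [Nat.sub_self, seqU, Matrix.mulVec_add, hsol]
    rw [Finset.sum_attach (Finset.range i) (fun l => Matrix.mulVec (H (i - l)) (seqU H sol base l))]
    abel
  rw [h1]; abel

/-- For an (n,k) convolutional code given by a full-row-rank
parity-check matrix H(z) = Σ H_i z^i (in particular H_0 has full row rank n-k),
the j-th column distance satisfies d_j^c ≤ (j+1)(n-k) + 1 for every j ≥ 0. -/
theorem stmt10 {F : Type*} [Field F] (n k : ℕ) (hk0 : 0 < k) (hk : k < n)
    (H : ℕ → Matrix (Fin (n - k)) (Fin n) F)
    (hrank : (H 0).rank = n - k) (j : ℕ) :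
    colDist n k hk H j ≤ (j + 1) * (n - k) + 1 := by
  classical
  have hn : 0 < n := by omega
  have hnk : 0 < n - k := by omega
  obtain ⟨s, hscard, sol, hsol, hsolz⟩ := exists_sol (H 0) hrank
  -- choose a column c outside s
  have hex : ∃ c : Fin n, c ∉ s := by
    by_contra h
    push_neg at h
    have : (Finset.univ : Finset (Fin n)) ⊆ s := fun x _ => h x
    have := Finset.card_le_card this
    simp [hscard] at this
    omega
  obtain ⟨c, hc⟩ := hex
  set base : ℕ → Fin n → F := fun i => if i = 0 then Pi.single c (1 : F) else 0 with hbase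
  set u : ℕ → Fin n → F := seqU H sol base with hu
  set v : Fin ((j + 1) * n) → F :=
    fun a => u ((a : ℕ) / n) ⟨(a : ℕ) % n, Nat.mod_lt _ hn⟩ with hv
  -- facts about the index equivalence
  have hdiv : ∀ (p : Fin (j + 1)) (q : Fin n), ((q : ℕ) + n * (p : ℕ)) / n = (p : ℕ) := by
    intro p q
    rw [Nat.add_mul_div_left _ _ hn, Nat.div_eq_of_lt q.2, Nat.zero_add]
  have hmod : ∀ (p : Fin (j + 1)) (q : Fin n), ((q : ℕ) + n * (p : ℕ)) % n = (q : ℕ) := by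
    intro p q
    rw [Nat.add_mul_mod_self_left, Nat.mod_eq_of_lt q.2]
  -- kernel
  have hker : Matrix.mulVec (slidingParity n k hk H j) v = 0 := by
    funext a
    have hrj : (a : ℕ) / (n - k) < j + 1 :=
      Nat.div_lt_of_lt_mul (by simpa [mul_comm] using a.2)
    set r : ℕ := (a : ℕ) / (n - k) with hr
    rw [Matrix.mulVec, dotProduct]
    rw [← Equiv.sum_comp (finProdFinEquiv (m := j + 1) (n := n))
      (fun b => slidingParity n k hk H j a b * v b)]
    rw [Fintype.sum_prod_type]
    have hterm : ∀ (p : Fin (j + 1)) (q : Fin n),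
        slidingParity n k hk H j a (finProdFinEquiv (p, q)) * v (finProdFinEquiv (p, q))
        = if (p : ℕ) ≤ r then
            H (r - (p : ℕ)) ⟨(a : ℕ) % (n - k), Nat.mod_lt _ (by omega)⟩ q * u (p : ℕ) q
          else 0 := by
      intro p q
      have hval : ((finProdFinEquiv (p, q) : Fin ((j + 1) * n)) : ℕ) = (q : ℕ) + n * (p : ℕ) := rfl
      simp only [slidingParity, Matrix.of_apply, hv, hval, hdiv, hmod, Fin.eta, ← hr]
      split
      · rfl
      · rw [zero_mul]
    simp_rw [hterm]
    have hinner : ∀ p : Fin (j + 1),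
        (∑ q : Fin n, if (p : ℕ) ≤ r then
            H (r - (p : ℕ)) ⟨(a : ℕ) % (n - k), Nat.mod_lt _ (by omega)⟩ q * u (p : ℕ) q
          else 0)
        = if (p : ℕ) ≤ r then
            Matrix.mulVec (H (r - (p : ℕ))) (u (p : ℕ)) ⟨(a : ℕ) % (n - k), Nat.mod_lt _ (by omega)⟩
          else 0 := by
      intro p
      split
      · rw [Matrix.mulVec, dotProduct]
      · exact Finset.sum_const_zero
    simp_rw [hinner]
    rw [Fin.sum_univ_eq_sum_range
      (fun l => if l ≤ r then
        Matrix.mulVec (H (r - l)) (u l) ⟨(a : ℕ) % (n - k), Nat.mod_lt _ (by omega)⟩ else 0)]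
    rw [← Finset.sum_filter]
    have hfilt : (Finset.range (j + 1)).filter (· ≤ r) = Finset.range (r + 1) := by
      ext l
      simp only [Finset.mem_filter, Finset.mem_range]
      omega
    rw [hfilt]
    have hkey := seqU_key H sol base hsol r
    have := congrFun hkey ⟨(a : ℕ) % (n - k), Nat.mod_lt _ (by omega)⟩
    rw [Finset.sum_apply] at this
    simpa using this
  -- nonzero in first block
  have hcz : (c : ℕ) < (j + 1) * n := lt_of_lt_of_le c.2 (Nat.le_mul_of_pos_left n (by omega))
  have hsolc : ∀ T, sol T c = 0 := fun T => hsolz T c hc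
  have hnz : ∃ t : Fin ((j + 1) * n), (t : ℕ) < n ∧ v t ≠ 0 := by
    refine ⟨⟨(c : ℕ), hcz⟩, c.2, ?_⟩
    have h0 : ((c : ℕ)) / n = 0 := Nat.div_eq_of_lt c.2
    have h1 : ((c : ℕ)) % n = (c : ℕ) := Nat.mod_eq_of_lt c.2
    simp only [hv, h0, h1, Fin.eta]
    rw [hu, seqU]
    simp only [Pi.add_apply]
    rw [hsolc]
    simp [hbase, Pi.single_eq_same]
  -- weight bound
  have hwt : hammingWt v ≤ (j + 1) * (n - k) + 1 := by
    have h1 : hammingWt v = (Finset.univ.filter fun a => v a ≠ 0).card := by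
      rw [hammingWt, Nat.card_eq_fintype_card, Fintype.card_subtype]
    set c0 : Fin ((j + 1) * n) := ⟨(c : ℕ), hcz⟩ with hc0
    have hsupp : (Finset.univ.filter fun a => v a ≠ 0) ⊆
        (Finset.univ.filter fun a : Fin ((j + 1) * n) =>
          (⟨(a : ℕ) % n, Nat.mod_lt _ hn⟩ : Fin n) ∈ s) ∪ {c0} := by
      intro a ha
      simp only [Finset.mem_filter, Finset.mem_univ, true_and] at ha
      simp only [Finset.mem_union, Finset.mem_filter, Finset.mem_univ, true_and,
        Finset.mem_singleton]
      by_contra hmem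
      push_neg at hmem
      obtain ⟨hnots', hnec0⟩ := hmem
      apply ha
      have hva : v a = u ((a : ℕ) / n) ⟨(a : ℕ) % n, Nat.mod_lt _ hn⟩ := rfl
      rw [hva, hu, seqU]
      simp only [Pi.add_apply]
      rw [hsolz _ _ hnots', add_zero]
      rw [hbase]
      by_cases h0 : (a : ℕ) / n = 0
      · simp only [h0, if_pos rfl]
        apply Pi.single_eq_of_ne
        intro heq
        apply hnec0
        apply Fin.ext
        have : (a : ℕ) % n = (c : ℕ) := congrArg Fin.val heq
        have h2 : (a : ℕ) = n * ((a : ℕ) / n) + (a : ℕ) % n := (Nat.div_add_mod _ _).symm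
        show (a : ℕ) = (c : ℕ)
        calc (a : ℕ) = n * ((a : ℕ) / n) + (a : ℕ) % n := h2
          _ = (c : ℕ) := by rw [h0, this, Nat.mul_zero, Nat.zero_add]
      · simp [h0]
    have hcard1 : (Finset.univ.filter fun a : Fin ((j + 1) * n) =>
        (⟨(a : ℕ) % n, Nat.mod_lt _ hn⟩ : Fin n) ∈ s).card = (j + 1) * (n - k) := by
      rw [Finset.card_filter]
      rw [← Equiv.sum_comp (finProdFinEquiv (m := j + 1) (n := n))
        (fun a : Fin ((j + 1) * n) => if (⟨(a : ℕ) % n, Nat.mod_lt _ hn⟩ : Fin n) ∈ s then 1 else 0)]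
      rw [Fintype.sum_prod_type]
      have : ∀ (p : Fin (j + 1)) (q : Fin n),
          (if (⟨((finProdFinEquiv (p, q) : Fin ((j + 1) * n)) : ℕ) % n, Nat.mod_lt _ hn⟩ : Fin n) ∈ s
            then (1 : ℕ) else 0) = if q ∈ s then 1 else 0 := by
        intro p q
        have hval : ((finProdFinEquiv (p, q) : Fin ((j + 1) * n)) : ℕ) = (q : ℕ) + n * (p : ℕ) := rfl
        simp only [hval, hmod, Fin.eta]
      simp_rw [this]
      have hinner2 : (∑ q : Fin n, if q ∈ s then (1 : ℕ) else 0) = s.card := by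
        rw [← Finset.card_filter]
        congr 1
        exact Finset.filter_univ_mem s
      simp_rw [hinner2]
      rw [Finset.sum_const, Finset.card_univ, Fintype.card_fin, smul_eq_mul, hscard]
    rw [h1]
    calc (Finset.univ.filter fun a => v a ≠ 0).card
        ≤ ((Finset.univ.filter fun a : Fin ((j + 1) * n) =>
            (⟨(a : ℕ) % n, Nat.mod_lt _ hn⟩ : Fin n) ∈ s) ∪ {c0}).card :=
          Finset.card_le_card hsupp
      _ ≤ (Finset.univ.filter fun a : Fin ((j + 1) * n) =>
            (⟨(a : ℕ) % n, Nat.mod_lt _ hn⟩ : Fin n) ∈ s).card + 1 := by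
          refine (Finset.card_union_le _ _).trans ?_
          simp
      _ = (j + 1) * (n - k) + 1 := by rw [hcard1]
  exact le_trans (Nat.sInf_le ⟨v, hker, hnz, rfl⟩) hwt
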